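/- Let K be a number field of degree n. Let H ⊆ (K⊗ℝ)^× be the subgroup generated by the image of the unit group O_K^× under the diagonal embedding K → K⊗ℝ together with the positive real scalars {t·1 : t ∈ ℝ, t > 0}. Then the quotient topological group (K⊗ℝ)^× / H is a compact commutative topological group. -/

import Mathlib

open NumberField NumberField.mixedEmbedding

section Aux

open NumberField.InfinitePlace NumberField.Units NumberField.Units.dirichletUnitTheorem
  NumberField.mixedEmbedding.fundamentalCone Bornology Topology

variable {K : Type*} [Field K] [NumberField K]

omit [NumberField K] in
private theorem aux_continuous_normAtPlace (w : InfinitePlace K) :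
    Continuous (fun x : mixedSpace K => normAtPlace w x) := by
  obtain hw | hw := isReal_or_isComplex w
  · simp_rw [normAtPlace_apply_of_isReal hw]
    exact ((continuous_apply _).comp continuous_fst).norm
  · simp_rw [normAtPlace_apply_of_isComplex hw]
    exact ((continuous_apply _).comp continuous_snd).norm

omit [NumberField K] in
private theorem aux_mult_le_two (w : InfinitePlace K) : (mult w : ℝ) ≤ 2 := by
  rw [mult]
  split_ifs <;> norm_num

omit [NumberField K] in
private theorem aux_smul_one_mul (c : ℝ) (z : mixedSpace K) :
    (c • (1 : mixedSpace K)) * z = c • z := by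
  refine Prod.ext (funext fun w => ?_) (funext fun w => ?_) <;>
    simp [Prod.fst_mul, Prod.snd_mul, Pi.mul_apply, Prod.smul_fst, Prod.smul_snd,
      Pi.smul_apply, smul_eq_mul, Complex.real_smul]

private theorem aux_log_bound {C : ℝ} (hC : 0 ≤ C) {y : mixedSpace K}
    (h1 : mixedEmbedding.norm y = 1)
    (h2 : ∀ w : InfinitePlace K, w ≠ w₀ → |Real.log (normAtPlace w y)| ≤ C)
    (w : InfinitePlace K) :
    |Real.log (normAtPlace w y)| ≤ 2 * C * (Fintype.card (InfinitePlace K)) + C := by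
  classical
  have hpos : ∀ w : InfinitePlace K, 0 < normAtPlace w y := fun w => by
    refine (normAtPlace_nonneg w y).lt_of_ne' ?_
    exact mixedEmbedding.norm_ne_zero_iff.mp (by rw [h1]; exact one_ne_zero) w
  have hsum : ∑ w' : InfinitePlace K, (mult w' : ℝ) * Real.log (normAtPlace w' y) = 0 := by
    have h := congrArg Real.log h1
    rw [Real.log_one, mixedEmbedding.norm_apply,
      Real.log_prod (fun w' _ => pow_ne_zero _ (hpos w').ne')] at h
    simp_rw [Real.log_pow] at h
    exact h
  by_cases hw : w = w₀
  · subst hw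
    have he : (mult (w₀ : InfinitePlace K) : ℝ) * Real.log (normAtPlace w₀ y) =
        -∑ w' ∈ Finset.univ.erase (w₀ : InfinitePlace K),
          (mult w' : ℝ) * Real.log (normAtPlace w' y) := by
      rw [eq_neg_iff_add_eq_zero, Finset.add_sum_erase Finset.univ
        (fun w' => (mult w' : ℝ) * Real.log (normAtPlace w' y)) (Finset.mem_univ _)]
      exact hsum
    calc |Real.log (normAtPlace (w₀ : InfinitePlace K) y)|
        ≤ (mult (w₀ : InfinitePlace K) : ℝ) * |Real.log (normAtPlace w₀ y)| :=
          le_mul_of_one_le_left (abs_nonneg _) one_le_mult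
      _ = |(mult (w₀ : InfinitePlace K) : ℝ) * Real.log (normAtPlace w₀ y)| := by
          rw [abs_mul, Nat.abs_cast]
      _ = |∑ w' ∈ Finset.univ.erase (w₀ : InfinitePlace K),
            (mult w' : ℝ) * Real.log (normAtPlace w' y)| := by
          rw [he, abs_neg]
      _ ≤ ∑ w' ∈ Finset.univ.erase (w₀ : InfinitePlace K),
            |(mult w' : ℝ) * Real.log (normAtPlace w' y)| :=
          Finset.abs_sum_le_sum_abs _ _
      _ ≤ ∑ _w' ∈ Finset.univ.erase (w₀ : InfinitePlace K), 2 * C := by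
          refine Finset.sum_le_sum fun w' hw' => ?_
          rw [abs_mul, Nat.abs_cast]
          exact mul_le_mul (aux_mult_le_two w') (h2 w' (Finset.ne_of_mem_erase hw'))
            (abs_nonneg _) (by norm_num)
      _ = ((Finset.univ.erase (w₀ : InfinitePlace K)).card : ℝ) * (2 * C) := by
          rw [Finset.sum_const, nsmul_eq_mul]
      _ ≤ 2 * C * (Fintype.card (InfinitePlace K)) := by
          rw [mul_comm]
          refine mul_le_mul_of_nonneg_left ?_ (by positivity)
          exact_mod_cast Nat.cast_le.mpr ((Finset.card_erase_le).trans (le_of_eq rfl))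
      _ ≤ 2 * C * (Fintype.card (InfinitePlace K)) + C := le_add_of_nonneg_right hC
  · exact (h2 w hw).trans (le_add_of_nonneg_left (by positivity))

private theorem aux_isCompact {a b : ℝ} (ha : 0 < a) :
    IsCompact {s : (mixedSpace K)ˣ |
      ∀ w : InfinitePlace K, normAtPlace w (s : mixedSpace K) ∈ Set.Icc a b} := by
  classical
  set S' : Set (mixedSpace K) := {y | ∀ w : InfinitePlace K, normAtPlace w y ∈ Set.Icc a b}
    with hS'
  have hclosed : IsClosed S' := by
    have : S' = ⋂ w : InfinitePlace K, (fun y => normAtPlace w y) ⁻¹' (Set.Icc a b) := by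
      ext y; simp [hS', Set.mem_iInter]
    rw [this]
    exact isClosed_iInter fun w => isClosed_Icc.preimage (aux_continuous_normAtPlace w)
  have hbdd : IsBounded S' := by
    rw [isBounded_iff_forall_norm_le]
    refine ⟨b, fun y hy => ?_⟩
    rw [norm_eq_sup'_normAtPlace]
    exact Finset.sup'_le _ _ fun w _ => (hy w).2
  have hcomp : IsCompact S' := Metric.isCompact_of_isClosed_isBounded hclosed hbdd
  have himg : Units.val ''
      {s : (mixedSpace K)ˣ |
        ∀ w : InfinitePlace K, normAtPlace w (s : mixedSpace K) ∈ Set.Icc a b} = S' := by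
    ext y
    constructor
    · rintro ⟨s, hs, rfl⟩
      exact hs
    · intro hy
      have h1 : ∀ w : {w : InfinitePlace K // IsReal w}, y.1 w ≠ 0 := fun w => by
        have := (hy w.1).1
        rw [normAtPlace_apply_of_isReal w.2] at this
        exact norm_pos_iff.mp (ha.trans_le this)
      have h2 : ∀ w : {w : InfinitePlace K // IsComplex w}, y.2 w ≠ 0 := fun w => by
        have := (hy w.1).1
        rw [normAtPlace_apply_of_isComplex w.2] at this
        exact norm_pos_iff.mp (ha.trans_le this)
      have hunit : IsUnit y := by
        refine IsUnit.of_mul_eq_one (fun w => (y.1 w)⁻¹, fun w => (y.2 w)⁻¹) ?_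
        refine Prod.ext (funext fun w => ?_) (funext fun w => ?_)
        · exact mul_inv_cancel₀ (h1 w)
        · exact mul_inv_cancel₀ (h2 w)
      obtain ⟨s, rfl⟩ := hunit
      exact ⟨s, hy, rfl⟩
  have hemb : Topology.IsEmbedding (Units.val : (mixedSpace K)ˣ → mixedSpace K) :=
    Units.isOpenEmbedding_val.toIsEmbedding
  rw [hemb.isCompact_iff, himg]
  exact hcomp

end Aux

open NumberField.InfinitePlace NumberField.Units NumberField.Units.dirichletUnitTheorem
  NumberField.mixedEmbedding.fundamentalCone Bornology Module in
set_option maxHeartbeats 1000000 in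
set_option synthInstance.maxHeartbeats 400000 in
/-- **Compactness of `(K⊗ℝ)ˣ` modulo units and positive scalars.**
Let `H` be the subgroup of `(K⊗ℝ)ˣ` generated by the image of `(𝓞 K)ˣ` and the positive
real scalars. Then the quotient topological group `(K⊗ℝ)ˣ / H` is a compact commutative
topological group. -/
theorem mixedSpace_units_quotient_compact (K : Type*) [Field K] [NumberField K] :
    ∀ H : Subgroup ((mixedSpace K)ˣ),
      H = Subgroup.closure
        ({x : (mixedSpace K)ˣ | ∃ u : (𝓞 K)ˣ, (x : mixedSpace K) = mixedEmbedding K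
            ((u : 𝓞 K) : K)} ∪
         {x : (mixedSpace K)ˣ | ∃ t : ℝ, 0 < t ∧ (x : mixedSpace K) = t • (1 : mixedSpace K)}) →
      CompactSpace ((mixedSpace K)ˣ ⧸ H) ∧
      ∀ x y : (mixedSpace K)ˣ ⧸ H, x * y = y * x := by
  classical
  intro H hH
  refine ⟨?_, fun x y => mul_comm x y⟩
  -- a bound on the fundamental domain of the unit lattice
  obtain ⟨C₀, hC₀⟩ := isBounded_iff_forall_norm_le.mp
    (ZSpan.fundamentalDomain_isBounded ((basisUnitLattice K).ofZLatticeBasis ℝ _))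
  set C : ℝ := max C₀ 0 with hCdef
  have hC : 0 ≤ C := le_max_right _ _
  set M : ℝ := 2 * C * (Fintype.card (InfinitePlace K)) + C with hMdef
  have hM : 0 ≤ M := by positivity
  set U : Set ((mixedSpace K)ˣ) := {s : (mixedSpace K)ˣ |
    ∀ w : InfinitePlace K,
      normAtPlace w (s : mixedSpace K) ∈ Set.Icc (Real.exp (-M)) (Real.exp M)} with hUdef
  have hU : IsCompact U := aux_isCompact (Real.exp_pos _)
  -- every element of the quotient is represented by an element of `U`
  have key : ∀ x : (mixedSpace K)ˣ, ∃ s ∈ U,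
      (QuotientGroup.mk s : (mixedSpace K)ˣ ⧸ H) = QuotientGroup.mk x := by
    intro x
    have hxnorm : mixedEmbedding.norm (x : mixedSpace K) ≠ 0 :=
      (x.isUnit.map mixedEmbedding.norm).ne_zero
    obtain ⟨u, hu⟩ := exists_unit_smul_mem hxnorm
    have h0 : 0 < mixedEmbedding.norm (u • (x : mixedSpace K)) := norm_pos_of_mem hu
    set c : ℝ := (mixedEmbedding.norm (u • (x : mixedSpace K))) ^ (-(finrank ℚ K : ℝ)⁻¹)
      with hcdef
    have hcpos : 0 < c := Real.rpow_pos_of_pos h0 _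
    set y : mixedSpace K := c • (u • (x : mixedSpace K)) with hydef
    have hy : y ∈ NumberField.mixedEmbedding.fundamentalCone K := smul_mem_of_mem hu hcpos.ne'
    have hn1 : mixedEmbedding.norm y = 1 := by
      have hne : (finrank ℚ K : ℝ) ≠ 0 := Nat.cast_ne_zero.mpr finrank_pos.ne'
      rw [hydef, NumberField.mixedEmbedding.norm_smul, abs_of_pos hcpos, hcdef, ← Real.rpow_natCast _ (finrank ℚ K),
        ← Real.rpow_mul h0.le, neg_mul, inv_mul_cancel₀ hne, Real.rpow_neg_one,
        inv_mul_cancel₀ h0.ne']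
    -- bounds on `normAtPlace w y`
    have h2 : ∀ w : InfinitePlace K, w ≠ w₀ → |Real.log (normAtPlace w y)| ≤ C := by
      intro w hw
      have h3 : |logMap y ⟨w, hw⟩| ≤ C := by
        refine le_trans ?_ ((hC₀ _ hy.1).trans (le_max_left _ _))
        rw [← Real.norm_eq_abs]
        exact norm_le_pi_norm (logMap y) ⟨w, hw⟩
      rw [logMap_apply_of_norm_eq_one hn1] at h3
      calc |Real.log (normAtPlace w y)|
          ≤ (mult w : ℝ) * |Real.log (normAtPlace w y)| :=
            le_mul_of_one_le_left (abs_nonneg _) one_le_mult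
        _ = |(mult w : ℝ) * Real.log (normAtPlace w y)| := by rw [abs_mul, Nat.abs_cast]
        _ ≤ C := h3
    have hbounds : ∀ w : InfinitePlace K,
        normAtPlace w y ∈ Set.Icc (Real.exp (-M)) (Real.exp M) := by
      intro w
      have hlog : |Real.log (normAtPlace w y)| ≤ M := aux_log_bound hC hn1 h2 w
      have hp : 0 < normAtPlace w y := normAtPlace_pos_of_mem hy w
      obtain ⟨hl, hr⟩ := abs_le.mp hlog
      constructor
      · rw [← Real.exp_log hp]
        exact Real.exp_le_exp.mpr hl
      · rw [← Real.exp_log hp]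
        exact Real.exp_le_exp.mpr hr
    -- construct the representative in `U`
    have hinv : (c • (1 : mixedSpace K)) * (c⁻¹ • (1 : mixedSpace K)) = 1 := by
      rw [aux_smul_one_mul, smul_smul, mul_inv_cancel₀ hcpos.ne', one_smul]
    have hinv' : (c⁻¹ • (1 : mixedSpace K)) * (c • (1 : mixedSpace K)) = 1 := by
      rw [aux_smul_one_mul, smul_smul, inv_mul_cancel₀ hcpos.ne', one_smul]
    set e₂ : (mixedSpace K)ˣ := ⟨c • 1, c⁻¹ • 1, hinv, hinv'⟩ with he₂def
    set e₁ : (mixedSpace K)ˣ := Units.map (mixedEmbedding K).toMonoidHom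
      (Units.map (algebraMap (𝓞 K) K).toMonoidHom u) with he₁def
    have he₁ : (e₁ : mixedSpace K) = mixedEmbedding K (algebraMap (𝓞 K) K (u : 𝓞 K)) := rfl
    set s : (mixedSpace K)ˣ := e₂ * e₁ * x with hsdef
    have he₂ : (e₂ : mixedSpace K) = c • (1 : mixedSpace K) := rfl
    have hs : (s : mixedSpace K) = y := by
      rw [hsdef, Units.val_mul, Units.val_mul, he₁, he₂, hydef, unitSMul_smul, mul_assoc,
        aux_smul_one_mul]
    refine ⟨s, fun w => by rw [hs]; exact hbounds w, ?_⟩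
    have he₁H : e₁ ∈ H := by
      rw [hH]
      exact Subgroup.subset_closure (Or.inl ⟨u, by rw [he₁, RingOfIntegers.coe_eq_algebraMap]⟩)
    have he₂H : e₂ ∈ H := by
      rw [hH]
      exact Subgroup.subset_closure (Or.inr ⟨c, hcpos, rfl⟩)
    rw [QuotientGroup.eq]
    have hseq : s⁻¹ * x = (e₂ * e₁)⁻¹ := by
      rw [hsdef, mul_inv_rev (e₂ * e₁) x, mul_assoc, mul_comm ((e₂ * e₁)⁻¹) ↑x,
        ← mul_assoc, inv_mul_cancel, one_mul]
    rw [hseq]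
    exact H.inv_mem (H.mul_mem he₂H he₁H)
  -- conclude compactness
  rw [← isCompact_univ_iff]
  have huniv : (Set.univ : Set ((mixedSpace K)ˣ ⧸ H)) = QuotientGroup.mk '' U := by
    refine (Set.eq_univ_iff_forall.mpr fun z => ?_).symm
    obtain ⟨x, rfl⟩ := QuotientGroup.mk_surjective z
    obtain ⟨s, hsU, hs⟩ := key x
    exact ⟨s, hsU, hs⟩
  rw [huniv]
  exact hU.image QuotientGroup.continuous_mk
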